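/- Let (Ω, 𝒜, P) be a probability space, X, Y : Ω → ℝ random variables, and φ : [−1,1] → ℝ convex with φ(0) = 0. Then 0 ≤ ∫_{ℝ×ℝ} ∫_ℝ φ(F_{Y|X=x₁}(y) − F_{Y|X=x₂}(y)) dP^Y(y) d(P^X ⊗ P^X)(x₁,x₂) ≤ ∫_{ℝ×ℝ} ∫_ℝ φ(𝟙_{\{y₁ ≤ y\}} − 𝟙_{\{y₂ ≤ y\}}) dP^Y(y) d(P^Y ⊗ P^Y)(y₁,y₂). -/

import Mathlib

open MeasureTheory ProbabilityTheory Filter Set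
open scoped ENNReal Topology



-- Jensen for three points
lemma aux_jensen {φ : ℝ → ℝ} (hφ : ConvexOn ℝ (Set.Icc (-1 : ℝ) 1) φ) (hφ0 : φ 0 = 0)
    {a b : ℝ} (ha : a ∈ Set.Icc (0:ℝ) 1) (hb : b ∈ Set.Icc (0:ℝ) 1) :
    φ (a - b) ≤ a * (1 - b) * φ 1 + (1 - a) * b * φ (-1) := by
  obtain ⟨ha0, ha1⟩ := ha
  obtain ⟨hb0, hb1⟩ := hb
  have := hφ.map_sum_le (t := Finset.univ) (w := ![a * (1-b), (1-a)*b, a*b + (1-a)*(1-b)])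
    (p := ![1, -1, 0]) ?_ ?_ ?_
  · simp only [Fin.sum_univ_three, Matrix.cons_val_zero, Matrix.cons_val_one, Matrix.head_cons,
      Matrix.cons_val_two, Matrix.tail_cons, smul_eq_mul] at this
    have harg : a * (1-b) * 1 + (1-a)*b * (-1) + (a*b + (1-a)*(1-b)) * 0 = a - b := by ring
    rw [harg, hφ0] at this
    linarith
  · intro i _
    fin_cases i <;> simp <;> nlinarith
  · simp [Fin.sum_univ_three]; ring
  · intro i _
    fin_cases i <;> simp <;> norm_num


lemma aux_sym {φ : ℝ → ℝ} (hφ : ConvexOn ℝ (Set.Icc (-1 : ℝ) 1) φ) (hφ0 : φ 0 = 0)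
    {t : ℝ} (ht : t ∈ Set.Icc (-1:ℝ) 1) : 0 ≤ φ t + φ (-t) := by
  have hmt : -t ∈ Set.Icc (-1:ℝ) 1 := by
    simp only [Set.mem_Icc] at ht ⊢; constructor <;> linarith [ht.1, ht.2]
  have := hφ.2 ht hmt (by norm_num : (0:ℝ) ≤ 1/2) (by norm_num : (0:ℝ) ≤ 1/2) (by norm_num)
  simp only [smul_eq_mul] at this
  have h0 : (1/2 : ℝ) * t + (1/2) * (-t) = 0 := by ring
  rw [h0, hφ0] at this
  linarith

lemma aux_bdd {φ : ℝ → ℝ} (hφ : ConvexOn ℝ (Set.Icc (-1 : ℝ) 1) φ) (hφ0 : φ 0 = 0)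
    {t : ℝ} (ht : t ∈ Set.Icc (-1:ℝ) 1) : |φ t| ≤ max (φ 1) (φ (-1)) := by
  have key : ∀ s : ℝ, s ∈ Set.Icc (-1:ℝ) 1 → φ s ≤ max (φ 1) (φ (-1)) := by
    intro s hs
    simp only [Set.mem_Icc] at hs
    have := hφ.2 (by norm_num : (1:ℝ) ∈ Set.Icc (-1:ℝ) 1)
      (by norm_num : (-1:ℝ) ∈ Set.Icc (-1:ℝ) 1)
      (by linarith [hs.1] : (0:ℝ) ≤ (1+s)/2) (by linarith [hs.2] : (0:ℝ) ≤ (1-s)/2)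
      (by ring)
    simp only [smul_eq_mul] at this
    have h0 : (1+s)/2 * 1 + (1-s)/2 * (-1) = s := by ring
    rw [h0] at this
    have h1 : φ 1 ≤ max (φ 1) (φ (-1)) := le_max_left _ _
    have h2 : φ (-1) ≤ max (φ 1) (φ (-1)) := le_max_right _ _
    nlinarith [hs.1, hs.2]
  have hmt : -t ∈ Set.Icc (-1:ℝ) 1 := by
    simp only [Set.mem_Icc] at ht ⊢; constructor <;> linarith [ht.1, ht.2]
  have h1 := key t ht
  have h2 := key (-t) hmt
  have h3 := aux_sym hφ hφ0 ht
  rw [abs_le]; constructor <;> linarith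

-- measurability of clamped φ
lemma aux_meas {φ : ℝ → ℝ} (hφ : ConvexOn ℝ (Set.Icc (-1 : ℝ) 1) φ) :
    Measurable (fun t : ℝ => φ (max (-1) (min 1 t))) := by
  have hcont : ContinuousOn φ (Set.Ioo (-1:ℝ) 1) := by
    have := hφ.continuousOn_interior
    rwa [interior_Icc] at this
  have hproj : Continuous (fun t : ℝ => max (-1:ℝ) (min 1 t)) :=
    continuous_const.max (continuous_const.min continuous_id)
  have hrange : ∀ t : ℝ, max (-1:ℝ) (min 1 t) ∈ Set.Icc (-1:ℝ) 1 := by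
    intro t
    simp only [Set.mem_Icc]
    exact ⟨le_max_left _ _, max_le (by norm_num) (min_le_left _ _)⟩
  apply measurable_of_isOpen
  intro V hV
  have heq : (fun t : ℝ => φ (max (-1) (min 1 t))) ⁻¹' V
      = (fun t : ℝ => max (-1:ℝ) (min 1 t)) ⁻¹' (φ ⁻¹' V ∩ Set.Icc (-1) 1) := by
    ext t
    simp only [Set.mem_preimage, Set.mem_inter_iff]
    exact ⟨fun h => ⟨h, hrange t⟩, fun h => h.1⟩
  rw [heq]
  apply hproj.measurable
  have hsplit : φ ⁻¹' V ∩ Set.Icc (-1:ℝ) 1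
      = (Set.Ioo (-1:ℝ) 1 ∩ φ ⁻¹' V) ∪ (φ ⁻¹' V ∩ {-1, 1}) := by
    ext t
    simp only [Set.mem_inter_iff, Set.mem_union, Set.mem_Icc, Set.mem_Ioo, Set.mem_insert_iff,
      Set.mem_singleton_iff, Set.mem_preimage]
    constructor
    · rintro ⟨hv, h1, h2⟩
      rcases eq_or_lt_of_le h1 with h | h
      · exact Or.inr ⟨hv, Or.inl h.symm⟩
      rcases eq_or_lt_of_le h2 with h' | h'
      · exact Or.inr ⟨hv, Or.inr h'⟩
      · exact Or.inl ⟨⟨h, h'⟩, hv⟩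
    · rintro (⟨⟨h1, h2⟩, hv⟩ | ⟨hv, h | h⟩)
      · exact ⟨hv, le_of_lt h1, le_of_lt h2⟩
      · subst h; exact ⟨hv, le_refl _, by norm_num⟩
      · subst h; exact ⟨hv, by norm_num, le_refl _⟩
  rw [hsplit]
  apply MeasurableSet.union
  · exact (hcont.isOpen_inter_preimage isOpen_Ioo hV).measurableSet
  · exact Set.Countable.measurableSet
      ((Set.countable_insert.mpr (Set.countable_singleton _)).mono Set.inter_subset_right)


lemma aux_integrable {α : Type*} [MeasurableSpace α] {m : Measure α} [IsFiniteMeasure m]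
    {f : α → ℝ} {C : ℝ} (hf : Measurable f) (hb : ∀ a, |f a| ≤ C) : Integrable f m :=
  (integrable_const C).mono' hf.aestronglyMeasurable (ae_of_all _ (by simpa using hb))

lemma aux_prod_int {m : Measure ℝ} [IsProbabilityMeasure m] (f : ℝ → ℝ)
    (hf : Measurable f) (h0 : ∀ t, 0 ≤ f t) (h1 : ∀ t, f t ≤ 1) (c d : ℝ) :
    ∫ x : ℝ × ℝ, (f x.1 * (1 - f x.2) * c + (1 - f x.1) * f x.2 * d) ∂(m.prod m)
      = c * ((∫ t, f t ∂m) * (1 - ∫ t, f t ∂m)) + d * ((1 - ∫ t, f t ∂m) * (∫ t, f t ∂m)) := by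
  have hmf : Measurable (fun t => 1 - f t) := measurable_const.sub hf
  have hb : ∀ t, |f t| ≤ 1 := fun t => abs_le.mpr ⟨by linarith [h0 t], h1 t⟩
  have hmb : ∀ t, |1 - f t| ≤ 1 := fun t => abs_le.mpr ⟨by linarith [h1 t], by linarith [h0 t]⟩
  have hint1 : Integrable (fun x : ℝ × ℝ => f x.1 * (1 - f x.2) * c) (m.prod m) := by
    apply aux_integrable (C := |c|)
    · exact ((hf.comp measurable_fst).mul (hmf.comp measurable_snd)).mul measurable_const
    · intro a
      rw [abs_mul, abs_mul]
      calc |f a.1| * |1 - f a.2| * |c| ≤ 1 * 1 * |c| := by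
            gcongr <;> first | exact abs_nonneg _ | exact hb _ | exact hmb _
        _ = |c| := by ring
  have hint2 : Integrable (fun x : ℝ × ℝ => (1 - f x.1) * f x.2 * d) (m.prod m) := by
    apply aux_integrable (C := |d|)
    · exact ((hmf.comp measurable_fst).mul (hf.comp measurable_snd)).mul measurable_const
    · intro a
      rw [abs_mul, abs_mul]
      calc |1 - f a.1| * |f a.2| * |d| ≤ 1 * 1 * |d| := by
            gcongr <;> first | exact abs_nonneg _ | exact hb _ | exact hmb _
        _ = |d| := by ring
  rw [integral_add hint1 hint2, integral_mul_const, integral_mul_const]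
  have e1 : ∫ a : ℝ × ℝ, f a.1 * (1 - f a.2) ∂(m.prod m)
      = (∫ t, f t ∂m) * (∫ t, (1 - f t) ∂m) := integral_prod_mul f (fun t => 1 - f t)
  have e2 : ∫ a : ℝ × ℝ, (1 - f a.1) * f a.2 ∂(m.prod m)
      = (∫ t, (1 - f t) ∂m) * (∫ t, f t ∂m) := integral_prod_mul (fun t => 1 - f t) f
  rw [e1, e2]
  have hintf : Integrable f m := aux_integrable hf hb
  have : ∫ t, (1 - f t) ∂m = 1 - ∫ t, f t ∂m := by
    rw [integral_sub (integrable_const 1) hintf, integral_const]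
    simp
  rw [this]
  ring

-- restructured integrability for products
lemma aux_prod_integrable {m : Measure ℝ} [IsProbabilityMeasure m] (f : ℝ → ℝ)
    (hf : Measurable f) (h0 : ∀ t, 0 ≤ f t) (h1 : ∀ t, f t ≤ 1) (c d : ℝ) :
    Integrable (fun x : ℝ × ℝ => f x.1 * (1 - f x.2) * c + (1 - f x.1) * f x.2 * d)
      (m.prod m) := by
  have hmf : Measurable (fun t => 1 - f t) := measurable_const.sub hf
  have hb : ∀ t, |f t| ≤ 1 := fun t => abs_le.mpr ⟨by linarith [h0 t], h1 t⟩
  have hmb : ∀ t, |1 - f t| ≤ 1 := fun t => abs_le.mpr ⟨by linarith [h1 t], by linarith [h0 t]⟩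
  have hint1 : Integrable (fun x : ℝ × ℝ => f x.1 * (1 - f x.2) * c) (m.prod m) := by
    apply aux_integrable (C := |c|)
    · exact ((hf.comp measurable_fst).mul (hmf.comp measurable_snd)).mul measurable_const
    · intro a
      rw [abs_mul, abs_mul]
      calc |f a.1| * |1 - f a.2| * |c| ≤ 1 * 1 * |c| := by
            gcongr <;> first | exact abs_nonneg _ | exact hb _ | exact hmb _
        _ = |c| := by ring
  have hint2 : Integrable (fun x : ℝ × ℝ => (1 - f x.1) * f x.2 * d) (m.prod m) := by
    apply aux_integrable (C := |d|)
    · exact ((hmf.comp measurable_fst).mul (hf.comp measurable_snd)).mul measurable_const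
    · intro a
      rw [abs_mul, abs_mul]
      calc |1 - f a.1| * |f a.2| * |d| ≤ 1 * 1 * |d| := by
            gcongr <;> first | exact abs_nonneg _ | exact hb _ | exact hmb _
        _ = |d| := by ring
  exact hint1.add hint2

theorem stmt5 {Ω : Type*} [MeasurableSpace Ω] (P : Measure Ω) [IsProbabilityMeasure P]
    (X Y : Ω → ℝ) (hX : Measurable X) (hY : Measurable Y)
    (κ : Kernel ℝ ℝ) [IsMarkovKernel κ]
    (hκ : ∀ A B : Set ℝ, MeasurableSet A → MeasurableSet B →
      P.map (fun ω => (X ω, Y ω)) (A ×ˢ B) = ∫⁻ x in A, κ x B ∂(P.map X))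
    (φ : ℝ → ℝ) (hφ : ConvexOn ℝ (Set.Icc (-1 : ℝ) 1) φ) (hφ0 : φ 0 = 0) :
    0 ≤ ∫ x : ℝ × ℝ, (∫ y, φ ((κ x.1 (Set.Iic y)).toReal - (κ x.2 (Set.Iic y)).toReal)
            ∂(P.map Y)) ∂((P.map X).prod (P.map X)) ∧
    ∫ x : ℝ × ℝ, (∫ y, φ ((κ x.1 (Set.Iic y)).toReal - (κ x.2 (Set.Iic y)).toReal)
            ∂(P.map Y)) ∂((P.map X).prod (P.map X)) ≤
      ∫ p : ℝ × ℝ, (∫ y, φ ((if p.1 ≤ y then (1 : ℝ) else 0) - (if p.2 ≤ y then (1 : ℝ) else 0))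
            ∂(P.map Y)) ∂((P.map Y).prod (P.map Y)) := by
  have hνP : IsProbabilityMeasure (P.map X) := Measure.isProbabilityMeasure_map hX.aemeasurable
  have hμP : IsProbabilityMeasure (P.map Y) := Measure.isProbabilityMeasure_map hY.aemeasurable
  set ν := P.map X with hνdef
  set μ := P.map Y with hμdef
  set G : ℝ → ℝ := fun y => (μ (Set.Iic y)).toReal with hGdef
  -- basic facts about F
  have hF01 : ∀ x y, (κ x (Set.Iic y)).toReal ∈ Set.Icc (0:ℝ) 1 := by
    intro x y
    constructor
    · exact ENNReal.toReal_nonneg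
    · have h : κ x (Set.Iic y) ≤ 1 := prob_le_one
      simpa using ENNReal.toReal_mono ENNReal.one_ne_top h
  have hsub : ∀ (x : ℝ × ℝ) (y : ℝ),
      (κ x.1 (Set.Iic y)).toReal - (κ x.2 (Set.Iic y)).toReal ∈ Set.Icc (-1:ℝ) 1 := by
    intro x y
    have h1 := hF01 x.1 y
    have h2 := hF01 x.2 y
    simp only [Set.mem_Icc] at h1 h2 ⊢
    constructor <;> linarith [h1.1, h1.2, h2.1, h2.2]
  -- joint measurability of (x, y) ↦ κ x (Iic y)
  have hFmeas2 : Measurable (fun p : ℝ × ℝ => κ p.1 (Set.Iic p.2)) := by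
    have ht : MeasurableSet {p : (ℝ × ℝ) × ℝ | p.2 ≤ p.1.2} :=
      measurableSet_le measurable_snd measurable_fst.snd
    have h := Kernel.measurable_kernel_prodMk_left
      (κ := κ.comap Prod.fst measurable_fst) ht
    simp only [Kernel.comap_apply] at h
    exact h
  -- ∫ F = G
  have hGμ : ∀ y, ∫⁻ x, κ x (Set.Iic y) ∂ν = μ (Set.Iic y) := by
    intro y
    have h := hκ Set.univ (Set.Iic y) MeasurableSet.univ measurableSet_Iic
    rw [Measure.restrict_univ] at h
    rw [← h, Measure.map_apply (hX.prodMk hY) (MeasurableSet.univ.prod measurableSet_Iic),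
      hμdef, Measure.map_apply hY measurableSet_Iic]
    congr 1
    ext ω
    simp [Set.mem_prod]
  have hGint : ∀ y, ∫ x, (κ x (Set.Iic y)).toReal ∂ν = G y := by
    intro y
    rw [integral_toReal ((Kernel.measurable_coe κ measurableSet_Iic).aemeasurable)
      (ae_of_all _ fun x => lt_of_le_of_lt prob_le_one ENNReal.one_lt_top), hGμ y]
  -- clamping
  have hclamp : ∀ t ∈ Set.Icc (-1:ℝ) 1, max (-1) (min 1 t) = t := by
    intro t ht
    rw [min_eq_right ht.2, max_eq_right ht.1]
  -- measurability of the main integrand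
  have hLmeas : Measurable (fun p : (ℝ × ℝ) × ℝ =>
      φ ((κ p.1.1 (Set.Iic p.2)).toReal - (κ p.1.2 (Set.Iic p.2)).toReal)) := by
    have harg : Measurable (fun p : (ℝ × ℝ) × ℝ =>
        (κ p.1.1 (Set.Iic p.2)).toReal - (κ p.1.2 (Set.Iic p.2)).toReal) :=
      ((hFmeas2.comp (measurable_fst.fst.prodMk measurable_snd)).ennreal_toReal).sub
        ((hFmeas2.comp (measurable_fst.snd.prodMk measurable_snd)).ennreal_toReal)
    have heq : (fun p : (ℝ × ℝ) × ℝ =>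
        φ ((κ p.1.1 (Set.Iic p.2)).toReal - (κ p.1.2 (Set.Iic p.2)).toReal))
        = (fun t : ℝ => φ (max (-1) (min 1 t))) ∘ (fun p : (ℝ × ℝ) × ℝ =>
          (κ p.1.1 (Set.Iic p.2)).toReal - (κ p.1.2 (Set.Iic p.2)).toReal) := by
      funext p
      simp only [Function.comp_apply]
      rw [hclamp _ (hsub p.1 p.2)]
    rw [heq]
    exact (aux_meas hφ).comp harg
  have hLint : Integrable (fun p : (ℝ × ℝ) × ℝ =>
      φ ((κ p.1.1 (Set.Iic p.2)).toReal - (κ p.1.2 (Set.Iic p.2)).toReal))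
      ((ν.prod ν).prod μ) :=
    aux_integrable hLmeas (fun p => aux_bdd hφ hφ0 (hsub p.1 p.2))
  -- the swap
  have hswap : ∫ x : ℝ × ℝ, (∫ y, φ ((κ x.1 (Set.Iic y)).toReal - (κ x.2 (Set.Iic y)).toReal)
        ∂μ) ∂(ν.prod ν)
      = ∫ y, (∫ x : ℝ × ℝ, φ ((κ x.1 (Set.Iic y)).toReal - (κ x.2 (Set.Iic y)).toReal)
        ∂(ν.prod ν)) ∂μ :=
    integral_integral_swap hLint
  -- slice measurability / integrability
  have hBmeas : ∀ y : ℝ, Measurable (fun x : ℝ × ℝ =>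
      φ ((κ x.1 (Set.Iic y)).toReal - (κ x.2 (Set.Iic y)).toReal)) := by
    intro y
    exact hLmeas.comp (measurable_id.prodMk measurable_const)
  have hBint : ∀ y : ℝ, Integrable (fun x : ℝ × ℝ =>
      φ ((κ x.1 (Set.Iic y)).toReal - (κ x.2 (Set.Iic y)).toReal)) (ν.prod ν) := by
    intro y
    exact aux_integrable (hBmeas y) (fun x => aux_bdd hφ hφ0 (hsub x y))
  -- reversed slice
  have hBmeas' : ∀ y : ℝ, Measurable (fun x : ℝ × ℝ =>
      φ ((κ x.2 (Set.Iic y)).toReal - (κ x.1 (Set.Iic y)).toReal)) := by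
    intro y
    exact (hBmeas y).comp measurable_swap
  have hBint' : ∀ y : ℝ, Integrable (fun x : ℝ × ℝ =>
      φ ((κ x.2 (Set.Iic y)).toReal - (κ x.1 (Set.Iic y)).toReal)) (ν.prod ν) := by
    intro y
    exact aux_integrable (hBmeas' y) (fun x => aux_bdd hφ hφ0 (hsub (x.2, x.1) y))
  -- nonnegativity of slices
  have hB0 : ∀ y : ℝ, 0 ≤ ∫ x : ℝ × ℝ,
      φ ((κ x.1 (Set.Iic y)).toReal - (κ x.2 (Set.Iic y)).toReal) ∂(ν.prod ν) := by
    intro y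
    have hswapB : ∫ x : ℝ × ℝ,
        φ ((κ x.1 (Set.Iic y)).toReal - (κ x.2 (Set.Iic y)).toReal) ∂(ν.prod ν)
        = ∫ x : ℝ × ℝ,
        φ ((κ x.2 (Set.Iic y)).toReal - (κ x.1 (Set.Iic y)).toReal) ∂(ν.prod ν) := by
      rw [← integral_prod_swap (fun x : ℝ × ℝ =>
        φ ((κ x.2 (Set.Iic y)).toReal - (κ x.1 (Set.Iic y)).toReal))]
      rfl
    have hsum : (∫ x : ℝ × ℝ,
        φ ((κ x.1 (Set.Iic y)).toReal - (κ x.2 (Set.Iic y)).toReal) ∂(ν.prod ν))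
        + (∫ x : ℝ × ℝ,
        φ ((κ x.2 (Set.Iic y)).toReal - (κ x.1 (Set.Iic y)).toReal) ∂(ν.prod ν))
        = ∫ x : ℝ × ℝ,
          (φ ((κ x.1 (Set.Iic y)).toReal - (κ x.2 (Set.Iic y)).toReal)
            + φ ((κ x.2 (Set.Iic y)).toReal - (κ x.1 (Set.Iic y)).toReal)) ∂(ν.prod ν) :=
      (integral_add (hBint y) (hBint' y)).symm
    have hpos : 0 ≤ ∫ x : ℝ × ℝ,
        (φ ((κ x.1 (Set.Iic y)).toReal - (κ x.2 (Set.Iic y)).toReal)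
          + φ ((κ x.2 (Set.Iic y)).toReal - (κ x.1 (Set.Iic y)).toReal)) ∂(ν.prod ν) := by
      apply integral_nonneg
      intro x
      have := aux_sym hφ hφ0 (hsub x y)
      rwa [neg_sub] at this
    linarith [hsum, hswapB, hpos]
  -- upper bound for slices
  have hfmeas_y : ∀ y : ℝ, Measurable (fun x : ℝ => (κ x (Set.Iic y)).toReal) :=
    fun y => (Kernel.measurable_coe κ measurableSet_Iic).ennreal_toReal
  have hBC : ∀ y : ℝ, (∫ x : ℝ × ℝ,
      φ ((κ x.1 (Set.Iic y)).toReal - (κ x.2 (Set.Iic y)).toReal) ∂(ν.prod ν))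
      ≤ φ 1 * (G y * (1 - G y)) + φ (-1) * ((1 - G y) * G y) := by
    intro y
    have h0 : ∀ t, 0 ≤ (κ t (Set.Iic y)).toReal := fun t => (hF01 t y).1
    have h1 : ∀ t, (κ t (Set.Iic y)).toReal ≤ 1 := fun t => (hF01 t y).2
    have step1 : (∫ x : ℝ × ℝ,
        φ ((κ x.1 (Set.Iic y)).toReal - (κ x.2 (Set.Iic y)).toReal) ∂(ν.prod ν)) ≤
        ∫ x : ℝ × ℝ, ((κ x.1 (Set.Iic y)).toReal * (1 - (κ x.2 (Set.Iic y)).toReal) * φ 1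
          + (1 - (κ x.1 (Set.Iic y)).toReal) * (κ x.2 (Set.Iic y)).toReal * φ (-1))
          ∂(ν.prod ν) :=
      integral_mono (hBint y)
        (aux_prod_integrable _ (hfmeas_y y) h0 h1 (φ 1) (φ (-1)))
        (fun x => aux_jensen hφ hφ0 (hF01 x.1 y) (hF01 x.2 y))
    have step2 := aux_prod_int (m := ν) _ (hfmeas_y y) h0 h1 (φ 1) (φ (-1))
    rw [hGint y] at step2
    exact step1.trans (le_of_eq step2)
  -- facts about G
  have hG01 : ∀ y, G y ∈ Set.Icc (0:ℝ) 1 := by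
    intro y
    constructor
    · exact ENNReal.toReal_nonneg
    · simpa using ENNReal.toReal_mono ENNReal.one_ne_top (prob_le_one (μ := μ) (s := Set.Iic y))
  have hGmono : Monotone G := fun a b hab =>
    ENNReal.toReal_mono (measure_ne_top μ _) (measure_mono (Set.Iic_subset_Iic.mpr hab))
  have hGmeas : Measurable G := hGmono.measurable
  have hCint : Integrable (fun y => φ 1 * (G y * (1 - G y)) + φ (-1) * ((1 - G y) * G y)) μ := by
    apply aux_integrable (C := |φ 1| + |φ (-1)|)
    · exact (measurable_const.mul (hGmeas.mul (measurable_const.sub hGmeas))).add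
        (measurable_const.mul ((measurable_const.sub hGmeas).mul hGmeas))
    · intro y
      obtain ⟨hg0, hg1⟩ := hG01 y
      have e1 : |G y * (1 - G y)| ≤ 1 := abs_le.mpr ⟨by nlinarith, by nlinarith⟩
      have e2 : |(1 - G y) * G y| ≤ 1 := abs_le.mpr ⟨by nlinarith, by nlinarith⟩
      have t1 : |φ 1 * (G y * (1 - G y))| ≤ |φ 1| := by
        rw [abs_mul]
        exact mul_le_of_le_one_right (abs_nonneg _) e1
      have t2 : |φ (-1) * ((1 - G y) * G y)| ≤ |φ (-1)| := by
        rw [abs_mul]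
        exact mul_le_of_le_one_right (abs_nonneg _) e2
      exact (abs_add_le _ _).trans (add_le_add t1 t2)
  -- identity for the indicator integrand
  have hid : ∀ (p : ℝ × ℝ) (y : ℝ),
      φ ((if p.1 ≤ y then (1:ℝ) else 0) - (if p.2 ≤ y then (1:ℝ) else 0))
      = (if p.1 ≤ y then (1:ℝ) else 0) * (1 - (if p.2 ≤ y then (1:ℝ) else 0)) * φ 1
        + (1 - (if p.1 ≤ y then (1:ℝ) else 0)) * (if p.2 ≤ y then (1:ℝ) else 0) * φ (-1) := by
    intro p y
    by_cases h1 : p.1 ≤ y <;> by_cases h2 : p.2 ≤ y <;> simp [h1, h2, hφ0]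
  have hindm : Measurable (fun q : (ℝ × ℝ) × ℝ => if q.1.1 ≤ q.2 then (1:ℝ) else 0) :=
    Measurable.ite (measurableSet_le measurable_fst.fst measurable_snd)
      measurable_const measurable_const
  have hindm2 : Measurable (fun q : (ℝ × ℝ) × ℝ => if q.1.2 ≤ q.2 then (1:ℝ) else 0) :=
    Measurable.ite (measurableSet_le measurable_fst.snd measurable_snd)
      measurable_const measurable_const
  have hEint : Integrable (fun q : (ℝ × ℝ) × ℝ =>
      (if q.1.1 ≤ q.2 then (1:ℝ) else 0) * (1 - (if q.1.2 ≤ q.2 then (1:ℝ) else 0)) * φ 1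
      + (1 - (if q.1.1 ≤ q.2 then (1:ℝ) else 0)) * (if q.1.2 ≤ q.2 then (1:ℝ) else 0) * φ (-1))
      ((μ.prod μ).prod μ) := by
    apply aux_integrable (C := |φ 1| + |φ (-1)|)
    · exact ((hindm.mul (measurable_const.sub hindm2)).mul measurable_const).add
        (((measurable_const.sub hindm).mul hindm2).mul measurable_const)
    · intro q
      by_cases h1 : q.1.1 ≤ q.2 <;> by_cases h2 : q.1.2 ≤ q.2 <;>
        simp [h1, h2] <;>
        first
          | positivity
          | linarith [abs_nonneg (φ 1), abs_nonneg (φ (-1)), le_abs_self (φ 1),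
              le_abs_self (φ (-1))]
  have hindint : ∀ y : ℝ, ∫ t, (if t ≤ y then (1:ℝ) else 0) ∂μ = G y := by
    intro y
    have heq : (fun t => if t ≤ y then (1:ℝ) else 0)
        = (Set.Iic y).indicator (fun _ => (1:ℝ)) := by
      funext t
      simp [Set.indicator_apply]
    rw [heq, integral_indicator_const (1:ℝ) measurableSet_Iic]
    simp
    rfl
  have hinner : ∀ y : ℝ, ∫ p : ℝ × ℝ,
      ((if p.1 ≤ y then (1:ℝ) else 0) * (1 - (if p.2 ≤ y then (1:ℝ) else 0)) * φ 1
      + (1 - (if p.1 ≤ y then (1:ℝ) else 0)) * (if p.2 ≤ y then (1:ℝ) else 0) * φ (-1))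
      ∂(μ.prod μ)
      = φ 1 * (G y * (1 - G y)) + φ (-1) * ((1 - G y) * G y) := by
    intro y
    have h := aux_prod_int (m := μ) (fun t => if t ≤ y then (1:ℝ) else 0)
      (Measurable.ite measurableSet_Iic measurable_const measurable_const)
      (fun t => by by_cases h : t ≤ y <;> simp [h]) (fun t => by by_cases h : t ≤ y <;> simp [h]) (φ 1) (φ (-1))
    rw [hindint y] at h
    exact h
  have hR : (∫ p : ℝ × ℝ, (∫ y, φ ((if p.1 ≤ y then (1:ℝ) else 0)
        - (if p.2 ≤ y then (1:ℝ) else 0)) ∂μ) ∂(μ.prod μ))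
      = ∫ y, (φ 1 * (G y * (1 - G y)) + φ (-1) * ((1 - G y) * G y)) ∂μ := by
    simp_rw [hid]
    rw [integral_integral_swap hEint]
    exact integral_congr_ae (ae_of_all _ hinner)
  constructor
  · rw [hswap]
    exact integral_nonneg hB0
  · rw [hswap, hR]
    exact integral_mono_of_nonneg (ae_of_all _ hB0) hCint (ae_of_all _ hBC)
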